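/- The set of pairs {x, -x} for x ranging over G \ H (taking each pair once) is a frame starter in G \ H if and only if every element of G \ H has odd order. -/

import Mathlib

open scoped Classical

variable {G : Type*} [AddCommGroup G]

/-- The multiset of all elements appearing in the pairs of `S`. -/
def starterElems (S : Finset (G × G)) : Multiset G :=
  S.val.bind fun p => {p.1, p.2}

/-- The multiset of all differences `±(x - y)` arising from the pairs of `S`. -/
def starterDiffs (S : Finset (G × G)) : Multiset G :=
  S.val.bind fun p => {p.1 - p.2, p.2 - p.1}

/-- `S` is a frame starter in `G \ H`: its pairs partition `G \ H` and its
differences `±(x - y)` enumerate each element of `G \ H` exactly once. -/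
def IsFrameStarter (H : AddSubgroup G) (S : Finset (G × G)) : Prop :=
  (∀ z : G, (starterElems S).count z = if z ∈ H then 0 else 1) ∧
  (∀ z : G, (starterDiffs S).count z = if z ∈ H then 0 else 1)

/-- A frame starter is strong if the pair sums are pairwise distinct and avoid `H`. -/
def IsStrongFrameStarter (H : AddSubgroup G) (S : Finset (G × G)) : Prop :=
  IsFrameStarter H S ∧
  (∀ p ∈ S, p.1 + p.2 ∉ H) ∧
  (∀ p ∈ S, ∀ q ∈ S, p.1 + p.2 = q.1 + q.2 → p = q)

/-! ### Auxiliary lemmas -/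

private lemma succ_order_smul (x : G) : (addOrderOf x + 1) • x = x := by
  rw [add_nsmul, addOrderOf_nsmul_eq_zero, one_nsmul, zero_add]

private lemma half_smul_dbl (x : G) {t : ℕ} (ht : addOrderOf x = 2 * t + 1) :
    (t + 1) • (x + x) = x := by
  have h1 : (t + 1) • (x + x) = ((t + 1) * 2) • x := by
    rw [mul_smul, two_nsmul]
  have h2 : (t + 1) * 2 = addOrderOf x + 1 := by omega
  rw [h1, h2, succ_order_smul]

private lemma dbl_not_mem {H : AddSubgroup G} {x : G} (hx : x ∉ H)
    (hodd : Odd (addOrderOf x)) : x + x ∉ H := by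
  obtain ⟨t, ht⟩ := hodd
  intro hmem
  exact hx (half_smul_dbl x ht ▸ H.nsmul_mem hmem (t + 1))

private lemma exists_half {H : AddSubgroup G} {z : G} (hz : z ∉ H)
    (hodd : Odd (addOrderOf z)) : ∃ w : G, w ∉ H ∧ w + w = z := by
  obtain ⟨t, ht⟩ := hodd
  refine ⟨(t + 1) • z, ?_, ?_⟩
  · intro hmem
    exact hz (by
      have : (t + 1) • z + (t + 1) • z = z := by
        rw [← smul_add]; exact half_smul_dbl z ht
      exact this ▸ H.add_mem hmem hmem)
  · rw [← smul_add]; exact half_smul_dbl z ht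

private lemma dbl_inj_of_odd {x y : G} (hox : Odd (addOrderOf x))
    (hoy : Odd (addOrderOf y)) (h : x + x = y + y) : x = y := by
  obtain ⟨t, ht⟩ := hoy
  set m := addOrderOf y with hm
  -- y = (m+1) • x
  have hy1 : ((t + 1) * 2) • x = y := by
    rw [mul_smul, two_nsmul, h]
    exact half_smul_dbl y ht
  have hk : (t + 1) * 2 = m + 1 := by omega
  have hy2 : (m + 1) • x = y := by rw [← hk]; exact hy1
  -- (2*m) • x = 0
  have h2m : (2 * m) • x = 0 := by
    have e1 : (2 * m + 2) • x = 2 • x := by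
      have : (2 * m + 2) • x = 2 • ((m + 1) • x) := by
        rw [← mul_smul]; ring_nf
      rw [this, hy2, two_nsmul, two_nsmul, h]
    rw [add_nsmul] at e1
    exact (add_eq_right).mp e1
  have hdvd : addOrderOf x ∣ 2 * m := addOrderOf_dvd_of_nsmul_eq_zero h2m
  have hdvd2 : addOrderOf x ∣ m :=
    (Nat.Coprime.dvd_of_dvd_mul_left (hox.coprime_two_right) hdvd)
  have hmx : m • x = 0 := addOrderOf_dvd_iff_nsmul_eq_zero.mp hdvd2
  have := hy2
  rw [add_nsmul, hmx, one_nsmul, zero_add] at this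
  exact this

private lemma diffs_eq_map_dbl (S : Finset (G × G)) (h : ∀ p ∈ S, p.2 = -p.1) :
    starterDiffs S = (starterElems S).map (fun z => z + z) := by
  unfold starterDiffs starterElems
  rw [Multiset.map_bind]
  refine (Multiset.bind_congr fun p hp => ?_)
  have h2 := h p hp
  rw [h2]
  simp [sub_neg_eq_add, sub_eq_add_neg]

private lemma elems_eq_val [Fintype G] {H : AddSubgroup G} {S : Finset (G × G)}
    (hE : ∀ z : G, (starterElems S).count z = if z ∈ H then 0 else 1) :
    starterElems S = (Finset.univ.filter (fun z : G => z ∉ H)).val := by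
  refine Multiset.ext.mpr fun z => ?_
  rw [hE z, Multiset.count_eq_of_nodup (Finset.nodup _)]
  by_cases hz : z ∈ H <;> simp [hz]

theorem stmt_5 [Fintype G] (H : AddSubgroup G) :
    (∃ S : Finset (G × G), (∀ p ∈ S, p.2 = -p.1) ∧ IsFrameStarter H S) ↔
      ∀ x : G, x ∉ H → Odd (addOrderOf x) := by
  constructor
  · rintro ⟨S, hneg, hE, hD⟩ x hx
    set C : Finset G := Finset.univ.filter (fun z : G => z ∉ H) with hC
    have hs : starterElems S = C.val := elems_eq_val hE
    have hDm : ∀ z : G, ((C.val).map (fun w => w + w)).count z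
        = if z ∈ H then 0 else 1 := by
      intro z; rw [← hs, ← diffs_eq_map_dbl S hneg]; exact hD z
    have hmemC : ∀ w : G, w ∈ C.val ↔ w ∉ H := by
      intro w; simp [hC]
    have hmaps : ∀ w : G, w ∉ H → w + w ∉ H := by
      intro w hw hmem
      have h1 : 0 < ((C.val).map (fun w => w + w)).count (w + w) :=
        Multiset.count_pos.mpr (Multiset.mem_map_of_mem _ ((hmemC w).mpr hw))
      rw [hDm, if_pos hmem] at h1
      exact lt_irrefl 0 h1
    have hinj : ∀ w1 : G, w1 ∉ H → ∀ w2 : G, w2 ∉ H →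
        w1 + w1 = w2 + w2 → w1 = w2 := by
      intro w1 h1 w2 h2 heq
      by_contra hne
      have hle : ((C.val).map (fun w => w + w)).count (w1 + w1) ≤ 1 := by
        rw [hDm]; split <;> omega
      rw [Multiset.count_map] at hle
      have hfv : Multiset.filter (fun a => w1 + w1 = (fun w => w + w) a) C.val
          = (C.filter (fun a => w1 + w1 = a + a)).val := by
        rw [Finset.filter_val]; rfl
      rw [hfv] at hle
      have hsub : ({w1, w2} : Finset G) ⊆ C.filter (fun a => w1 + w1 = a + a) := by
        intro a ha
        rw [Finset.mem_insert, Finset.mem_singleton] at ha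
        rcases ha with rfl | rfl
        · exact Finset.mem_filter.mpr ⟨(hmemC a).mpr h1, rfl⟩
        · exact Finset.mem_filter.mpr ⟨(hmemC a).mpr h2, heq⟩
      have h2le := Finset.card_le_card hsub
      rw [Finset.card_pair hne] at h2le
      have : (C.filter (fun a => w1 + w1 = a + a)).card
          = Multiset.card (C.filter (fun a => w1 + w1 = a + a)).val := rfl
      omega
    -- iterates of doubling stay outside H
    have hdblpow : ∀ k : ℕ, (2 ^ (k + 1)) • x = (2 ^ k) • x + (2 ^ k) • x := by
      intro k
      rw [pow_succ', mul_smul, two_nsmul]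
    have hiter : ∀ i : ℕ, (2 ^ i) • x ∉ H := by
      intro i
      induction i with
      | zero => simpa using hx
      | succ i ih => rw [hdblpow i]; exact hmaps _ ih
    obtain ⟨i, j, hij, hfe⟩ :=
      Finite.exists_ne_map_eq_of_infinite (fun i : ℕ => (2 ^ i) • x)
    have key : ∀ i d : ℕ, (2 ^ i) • x = (2 ^ (i + d)) • x → x = (2 ^ d) • x := by
      intro i
      induction i with
      | zero => intro d h; simpa using h
      | succ i ih =>
          intro d h
          apply ih d
          apply hinj _ (hiter i) _ (hiter (i + d))
          rw [← hdblpow i, ← hdblpow (i + d)]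
          rw [show i + d + 1 = i + 1 + d by omega]
          exact h
    have hmain : ∃ d : ℕ, 1 ≤ d ∧ x = (2 ^ d) • x := by
      rcases lt_or_gt_of_ne hij with h | h
      · exact ⟨j - i, by omega, key i (j - i) (by rw [show i + (j - i) = j by omega]; exact hfe)⟩
      · exact ⟨i - j, by omega, key j (i - j) (by rw [show j + (i - j) = i by omega]; exact hfe.symm)⟩
    obtain ⟨d, hd1, hdx⟩ := hmain
    have hpow1 : 1 ≤ 2 ^ d := Nat.one_le_two_pow
    have hz : (2 ^ d - 1) • x = 0 := by
      have h2 : (2 ^ d - 1) + 1 = 2 ^ d := by omega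
      rw [← h2, add_nsmul, one_nsmul] at hdx
      exact (right_eq_add).mp hdx
    have hdvd : addOrderOf x ∣ 2 ^ d - 1 := addOrderOf_dvd_of_nsmul_eq_zero hz
    have hoddpow : Odd (2 ^ d - 1) := by
      refine Nat.Even.sub_odd hpow1 ?_ odd_one
      exact (Nat.even_pow).mpr ⟨even_two, by omega⟩
    rcases Nat.even_or_odd (addOrderOf x) with he | ho
    · exfalso
      have : (2 : ℕ) ∣ 2 ^ d - 1 := dvd_trans he.two_dvd hdvd
      exact (Nat.not_even_iff_odd.mpr hoddpow) (even_iff_two_dvd.mpr this)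
    · exact ho
  · intro hodd
    set e := Fintype.equivFin G with he
    set T : Finset G :=
      Finset.univ.filter (fun w : G => w ∉ H ∧ e w < e (-w)) with hT
    have hembinj : Function.Injective (fun w : G => (w, -w)) := by
      intro a b hab
      exact congrArg Prod.fst hab
    set S : Finset (G × G) := T.map ⟨fun w => (w, -w), hembinj⟩ with hS
    have hneg : ∀ p ∈ S, p.2 = -p.1 := by
      intro p hp
      rw [hS, Finset.mem_map] at hp
      obtain ⟨w, _, rfl⟩ := hp
      rfl
    have hmemT : ∀ w : G, w ∈ T ↔ w ∉ H ∧ e w < e (-w) := by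
      intro w; simp [hT]
    -- elems count
    have helems : starterElems S = T.val.bind fun w => {w, -w} := by
      unfold starterElems
      rw [hS, Finset.map_val, Multiset.bind_map]
      rfl
    have hE : ∀ z : G, (starterElems S).count z = if z ∈ H then 0 else 1 := by
      intro z
      rw [helems, Multiset.count_bind]
      have hsum : (Multiset.map (fun w => Multiset.count z ({w, -w} : Multiset G)) T.val).sum
          = ∑ w ∈ T, Multiset.count z ({w, -w} : Multiset G) := rfl
      rw [hsum]
      have hcnt : ∀ w : G, Multiset.count z ({w, -w} : Multiset G)
          = (if -z = w then 1 else 0) + (if z = w then 1 else 0) := by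
        intro w
        rw [show ({w, -w} : Multiset G) = w ::ₘ {-w} from rfl,
          Multiset.count_cons, Multiset.count_singleton]
        rw [(propext (neg_eq_iff_eq_neg (a := z) (b := w))).symm]
      rw [Finset.sum_congr rfl (fun w _ => hcnt w), Finset.sum_add_distrib,
        Finset.sum_ite_eq, Finset.sum_ite_eq]
      by_cases hz : z ∈ H
      · have h1 : z ∉ T := fun hmem => ((hmemT z).mp hmem).1 hz
        have h2 : -z ∉ T := fun hmem => ((hmemT (-z)).mp hmem).1 (neg_mem hz)
        rw [if_neg h1, if_neg h2, if_pos hz]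
        omega
      · have hzne : z ≠ -z := by
          intro hzz
          have h2z : (2 : ℕ) • z = 0 := by rw [two_nsmul]; nth_rewrite 2 [hzz]; simp
          have hdvd : addOrderOf z ∣ 2 := addOrderOf_dvd_of_nsmul_eq_zero h2z
          have h1 : addOrderOf z = 1 :=
            Nat.Coprime.eq_one_of_dvd ((hodd z hz).coprime_two_right) hdvd
          have : z = 0 := AddMonoid.addOrderOf_eq_one_iff.mp h1
          exact hz (this ▸ H.zero_mem)
        have hene : e z ≠ e (-z) := fun hh => hzne (e.injective hh)
        have hnz : -z ∉ H := fun hmem => hz (by simpa using neg_mem hmem)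
        rw [if_neg hz]
        rcases lt_or_gt_of_ne hene with hlt | hgt
        · have h1 : z ∈ T := (hmemT z).mpr ⟨hz, hlt⟩
          have h2 : -z ∉ T := by
            intro hmem
            have := ((hmemT (-z)).mp hmem).2
            rw [neg_neg] at this
            exact absurd hlt (not_lt.mpr (le_of_lt this))
          rw [if_pos h1, if_neg h2]
        · have h1 : z ∉ T := by
            intro hmem
            have := ((hmemT z).mp hmem).2
            exact absurd hgt (not_lt.mpr (le_of_lt this))
          have h2 : -z ∈ T := (hmemT (-z)).mpr ⟨hnz, by rw [neg_neg]; exact hgt⟩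
          rw [if_neg h1, if_pos h2]
          omega
    refine ⟨S, hneg, hE, ?_⟩
    -- diffs count
    set C : Finset G := Finset.univ.filter (fun z : G => z ∉ H) with hC
    have hs : starterElems S = C.val := elems_eq_val hE
    have hmemC : ∀ w : G, w ∈ C.val ↔ w ∉ H := by
      intro w; simp [hC]
    have hnodup : ((C.val).map (fun w => w + w)).Nodup := by
      refine Multiset.Nodup.map_on ?_ C.nodup
      intro a ha b hb hab
      exact dbl_inj_of_odd (hodd a ((hmemC a).mp ha)) (hodd b ((hmemC b).mp hb)) hab
    intro z
    rw [diffs_eq_map_dbl S hneg, hs, Multiset.count_eq_of_nodup hnodup]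
    by_cases hz : z ∈ H
    · rw [if_pos hz, if_neg]
      intro hmem
      rw [Multiset.mem_map] at hmem
      obtain ⟨w, hw, hww⟩ := hmem
      have hwH := (hmemC w).mp hw
      exact dbl_not_mem hwH (hodd w hwH) (hww ▸ hz)
    · rw [if_neg hz, if_pos]
      obtain ⟨w, hwH, hww⟩ := exists_half hz (hodd z hz)
      exact Multiset.mem_map.mpr ⟨w, (hmemC w).mpr hwH, hww⟩
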